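/- Let β ∈ (0,1) and let m_t^c := m_t - (β/(1-β)) r, where m_0 = m_0^f = 0, m_t^f = (1-β) g_t + β m_{t-1}^f, m_t = (1-β) g_t + β(m_{t-1} + r), and ‖r‖ ≤ C. Then ‖m_t^c - m_t^f‖ ≤ (C/(1-β)) β^{t+1}, and in particular m_t^c - m_t^f → 0 as t → ∞. -/

import Mathlib

open Filter

/-- The bias-corrected momentum `m_t^c = m_t - (β/(1-β)) r` approximates the
full momentum with geometrically decaying error, hence the difference tends
to zero. -/
theorem corrected_momentum_debiased
    {E : Type*} [NormedAddCommGroup E] [NormedSpace ℝ E]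
    (β : ℝ) (hβ : β ∈ Set.Ioo (0 : ℝ) 1)
    (C : ℝ) (r : E) (hr : ‖r‖ ≤ C)
    (m mf g : ℕ → E)
    (hm0 : m 0 = 0) (hmf0 : mf 0 = 0)
    (hmf : ∀ t ≥ 1, mf t = (1 - β) • g t + β • mf (t - 1))
    (hm : ∀ t ≥ 1, m t = (1 - β) • g t + β • (m (t - 1) + r)) :
    (∀ t, ‖(m t - (β / (1 - β)) • r) - mf t‖ ≤ (C / (1 - β)) * β ^ (t + 1)) ∧
      Tendsto (fun t => (m t - (β / (1 - β)) • r) - mf t) atTop (nhds 0) := by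
  obtain ⟨hβ0, hβ1⟩ := hβ
  have h1β : (0:ℝ) < 1 - β := by linarith
  have key : ∀ t, (m t - (β / (1 - β)) • r) - mf t = -((β ^ (t+1) / (1 - β)) • r) := by
    intro t
    induction t with
    | zero =>
      simp [hm0, hmf0]
    | succ t ih =>
      have hm' := hm (t+1) (by omega)
      have hmf' := hmf (t+1) (by omega)
      simp only [Nat.add_sub_cancel] at hm' hmf'
      have ih' : m t = -((β ^ (t+1) / (1 - β)) • r) + ((β / (1 - β)) • r + mf t) := by
        rw [← ih]; abel
      rw [hm', hmf', ih']
      match_scalars <;> (try field_simp) <;> ring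
  have hnorm : ∀ t, ‖(m t - (β / (1 - β)) • r) - mf t‖ ≤ (C / (1 - β)) * β ^ (t + 1) := by
    intro t
    rw [key t, norm_neg, norm_smul, Real.norm_eq_abs,
      abs_of_nonneg (by positivity : (0:ℝ) ≤ β ^ (t+1) / (1 - β))]
    calc β ^ (t+1) / (1 - β) * ‖r‖ ≤ β ^ (t+1) / (1 - β) * C := by
          apply mul_le_mul_of_nonneg_left hr (by positivity)
      _ = C / (1 - β) * β ^ (t+1) := by ring
  refine ⟨hnorm, ?_⟩
  have hpow : Tendsto (fun t : ℕ => β ^ (t+1)) atTop (nhds 0) := by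
    have := (tendsto_pow_atTop_nhds_zero_of_lt_one hβ0.le hβ1).comp
      (tendsto_add_atTop_nat 1)
    exact this
  have : Tendsto (fun t : ℕ => -((β ^ (t+1) / (1 - β)) • r)) atTop (nhds 0) := by
    have h := ((hpow.div_const (1 - β)).smul_const r).neg
    simpa using h
  exact this.congr fun t => (key t).symm
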